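/- Let w be a word of length n over a finite ordered alphabet Σ, let c be the number of cycles of its standard permutation σ_w, let σ_i be the standard permutation of dol(w,i), and let sgn denote the sign of a permutation. Then for every 1 ≤ i ≤ n+1, sgn(σ_i) = (−1)^{n−c+i−1}. -/

import Mathlib

namespace DollarBWT

/-- The list of all rotations of a word. -/
def rotations {α : Type*} (v : List α) : List (List α) :=
  (List.range v.length).map fun k => v.rotate k

/-- The Burrows–Wheeler transform of a word `v`: sort (stably) the multiset of all
rotations of `v` lexicographically and take the last character of each rotation. -/
def bwt {α : Type*} [LinearOrder α] (v : List α) : List α :=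
  ((rotations v).insertionSort (· ≤ ·)).filterMap List.getLast?

/-- `dol w i` inserts the sentinel `⊥` (playing the role of `$`, smaller than every
letter of the alphabet) at (1-based) position `i` of the word `w`. -/
def dol {α : Type*} [LinearOrder α] (w : List α) (i : ℕ) : List (WithBot α) :=
  (w.map (fun a => (a : WithBot α))).insertIdx (i - 1) ⊥

/-- Position `i` (1-based, `1 ≤ i ≤ |w|+1`) is *nice* for `w` if there is a word `v`
of the same length as `w` with `BWT(v$) = dol(w,i)`. -/
def Nice {α : Type*} [LinearOrder α] (w : List α) (i : ℕ) : Prop :=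
  ∃ v : List α, v.length = w.length ∧
    bwt (v.map (fun a => (a : WithBot α)) ++ [(⊥ : WithBot α)]) = dol w i

/-- `σ` (a permutation of `Fin n`, thought of as the positions `1,…,n` of `w`) is the
standard permutation of the word `w`. -/
def IsStdPerm {α : Type*} [LinearOrder α] {n : ℕ} (w : List α)
    (σ : Equiv.Perm (Fin n)) : Prop :=
  ∃ h : w.length = n, ∀ i j : Fin n,
    σ i < σ j ↔ (w.get (Fin.cast h.symm i) < w.get (Fin.cast h.symm j)
      ∨ (w.get (Fin.cast h.symm i) = w.get (Fin.cast h.symm j) ∧ i < j))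

/-- Application of a permutation of `Fin n` in 1-based terms: `ap σ k` is the image of
`k ∈ {1,…,n}` under `σ` read as a permutation of `{1,…,n}` (junk: `k` outside). -/
def ap {n : ℕ} (σ : Equiv.Perm (Fin n)) (k : ℕ) : ℕ :=
  if h : 1 ≤ k ∧ k ≤ n then ((σ ⟨k - 1, by omega⟩ : Fin n) : ℕ) + 1 else k

/-- `C` is a cycle of the permutation `σ`: a minimal non-empty subset with `σ(C) = C`. -/
def IsCycleOf {β : Type*} (σ : Equiv.Perm β) (C : Set β) : Prop :=
  C.Nonempty ∧ σ '' C = C ∧ ∀ D : Set β, D.Nonempty → D ⊆ C → σ '' D = D → D = C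

/-- The number of cycles in the cycle decomposition of `σ` (fixpoints count as cycles). -/
noncomputable def numCycles {β : Type*} (σ : Equiv.Perm β) : ℕ :=
  {C : Set β | IsCycleOf σ C}.ncard

/-- A permutation is cyclic if its cycle decomposition consists of a single cycle,
i.e. the whole domain is one cycle. -/
def PermCyclic {β : Type*} (σ : Equiv.Perm β) : Prop :=
  IsCycleOf σ (Set.univ : Set β)

/-- `C ⊆ {1,…,n}` (in 1-based terms) is a cycle of `σ`. -/
def IsCycleSet1 {n : ℕ} (σ : Equiv.Perm (Fin n)) (C : Set ℕ) : Prop :=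
  ∃ C' : Set (Fin n), IsCycleOf σ C' ∧ C = (fun x : Fin n => (x : ℕ) + 1) '' C'

/-- A word is primitive if it is not a proper power. -/
def Primitive {α : Type*} (v : List α) : Prop :=
  ∀ (u : List α) (k : ℕ), v = (List.replicate k u).flatten → k = 1

/-- `σ` equals the product of the cycles given (in 1-based terms) by the lists in `Ls`:
the lists are disjoint, consist of elements of `{1,…,n}`, `σ` maps each entry of each
list to the (cyclically) next one, and fixes everything else. -/
def IsCyclesProd {n : ℕ} (σ : Equiv.Perm (Fin n)) (Ls : List (List ℕ)) : Prop :=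
  Ls.flatten.Nodup ∧ (∀ L ∈ Ls, L ≠ []) ∧ (∀ x ∈ Ls.flatten, 1 ≤ x ∧ x ≤ n) ∧
  (∀ L ∈ Ls, ∀ (t : ℕ) (ht : t < L.length),
      ap σ (L.get ⟨t, ht⟩) = L.get ⟨(t + 1) % L.length, Nat.mod_lt _ (by omega)⟩) ∧
  (∀ x : ℕ, 1 ≤ x → x ≤ n → x ∉ Ls.flatten → ap σ x = x)

/-- `S ⊆ {1,…,n}` (1-based) is a pseudo-cycle of `σ` witnessed by the partition
`S = Sl ∪ Sr` with `Sl < Sr` and `σ(S) = (Sl − 1) ∪ Sr`. -/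
def IsPseudoCycleWith {n : ℕ} (σ : Equiv.Perm (Fin n)) (S Sl Sr : Set ℕ) : Prop :=
  S.Nonempty ∧ S ⊆ Set.Icc 1 n ∧ Sl ∪ Sr = S ∧ Disjoint Sl Sr ∧
    (∀ x ∈ Sl, ∀ y ∈ Sr, x < y) ∧
    ap σ '' S = ((fun x => x - 1) '' Sl) ∪ Sr

/-- The critical interval `[a+1, b]` of a pseudo-cycle with partition `Sl, Sr`,
where `a = max Sl` (`0` if `Sl = ∅`) and `b = min Sr` (`n+1` if `Sr = ∅`). -/
noncomputable def criticalInterval (n : ℕ) (Sl Sr : Set ℕ) : Set ℕ :=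
  Set.Icc (sSup Sl + 1) (sInf (insert (n + 1) Sr))

/-- `unshift(U, i) = { x ∈ U : x < i } ∪ { x − 1 : x ∈ U, x > i }`. -/
def unshift (U : Set ℕ) (i : ℕ) : Set ℕ :=
  {x | x ∈ U ∧ x < i} ∪ (fun x => x - 1) '' {x | x ∈ U ∧ i < x}

/-- The number of nice positions of `w`. -/
noncomputable def niceCount {α : Type*} [LinearOrder α] (w : List α) : ℕ :=
  {i : ℕ | 1 ≤ i ∧ i ≤ w.length + 1 ∧ Nice w i}.ncard

/-- `L`, the maximum over all cycles `C` of `σ` of the (1-based) minimum of `C`. -/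
noncomputable def Lval {n : ℕ} (σ : Equiv.Perm (Fin n)) : ℕ :=
  sSup ((fun C : Set (Fin n) => sInf ((fun x : Fin n => (x : ℕ) + 1) '' C)) ''
    {C | IsCycleOf σ C})

/-- The number of bad pairs of `σ`: cycles `C` which are not the cycle with the largest
minimum and such that `min C + 1 ∈ C` (all in 1-based terms). -/
noncomputable def badPairCount {n : ℕ} (σ : Equiv.Perm (Fin n)) : ℕ :=
  {C : Set (Fin n) | IsCycleOf σ C ∧
    sInf ((fun x : Fin n => (x : ℕ) + 1) '' C) < Lval σ ∧
    sInf ((fun x : Fin n => (x : ℕ) + 1) '' C) + 1 ∈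
      (fun x : Fin n => (x : ℕ) + 1) '' C}.ncard


section SignCycles

lemma pow_mem_of_image_eq {β : Type*} {σ : Equiv.Perm β} {D : Set β} (hD : σ '' D = D) :
    ∀ (k : ℕ) {y : β}, y ∈ D → (σ ^ k) y ∈ D := by
  intro k
  induction k with
  | zero => intro y hy; simpa using hy
  | succ k ih =>
    intro y hy
    have : σ ((σ ^ k) y) ∈ σ '' D := Set.mem_image_of_mem _ (ih hy)
    rw [hD] at this
    simpa [pow_succ', Equiv.Perm.mul_apply] using this

lemma image_orbit_eq {β : Type*} (σ : Equiv.Perm β) (x : β) :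
    σ '' {y | σ.SameCycle x y} = {y | σ.SameCycle x y} := by
  ext z
  constructor
  · rintro ⟨y, hy, rfl⟩
    exact hy.trans ⟨1, by simp⟩
  · intro hz
    exact ⟨σ⁻¹ z, hz.trans ⟨-1, by simp⟩, by simp⟩

lemma isCycleOf_iff_orbit {β : Type*} [Fintype β] (σ : Equiv.Perm β) (C : Set β) :
    IsCycleOf σ C ↔ ∃ x, C = {y | σ.SameCycle x y} := by
  constructor
  · rintro ⟨⟨x, hx⟩, hinv, hmin⟩
    refine ⟨x, (hmin {y | σ.SameCycle x y} ⟨x, ⟨0, by simp⟩⟩ ?_ (image_orbit_eq σ x)).symm⟩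
    rintro z (hz : σ.SameCycle x z)
    obtain ⟨k, -, rfl⟩ := hz.exists_pow_eq'
    exact pow_mem_of_image_eq hinv k hx
  · rintro ⟨x, rfl⟩
    refine ⟨⟨x, ⟨0, by simp⟩⟩, image_orbit_eq σ x, ?_⟩
    rintro D ⟨y, hy⟩ hsub hinv
    have hxy : σ.SameCycle x y := hsub hy
    apply Set.Subset.antisymm (by exact hsub)
    rintro z (hz : σ.SameCycle x z)
    have : σ.SameCycle y z := hxy.symm.trans hz
    obtain ⟨k, -, rfl⟩ := this.exists_pow_eq'
    exact pow_mem_of_image_eq hinv k hy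

lemma orbit_of_fixed {β : Type*} {σ : Equiv.Perm β} {x : β} (hx : σ x = x) :
    {y | σ.SameCycle x y} = {x} := by
  ext y
  simp only [Set.mem_setOf_eq, Set.mem_singleton_iff]
  constructor
  · rintro ⟨k, rfl⟩
    exact ((Function.IsFixedPt.perm_zpow hx k)).symm ▸ rfl
  · rintro rfl; exact ⟨0, by simp⟩

lemma orbit_of_mem_support {β : Type*} [Fintype β] [DecidableEq β] {σ : Equiv.Perm β} {x : β}
    (hx : x ∈ σ.support) :
    {y | σ.SameCycle x y} = ((σ.cycleOf x).support : Set β) := by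
  ext y
  simp only [Set.mem_setOf_eq, Finset.coe_sort_coe, Finset.mem_coe,
    Equiv.Perm.mem_support_cycleOf_iff, hx, and_true]

lemma numCycles_eq {β : Type*} [Fintype β] [DecidableEq β] (σ : Equiv.Perm β) :
    numCycles σ = (Fintype.card β - σ.support.card) + σ.cycleFactorsFinset.card := by
  classical
  set A : Set (Set β) := (fun x : β => ({x} : Set β)) '' {x | σ x = x} with hA
  set B : Set (Set β) := (fun g : Equiv.Perm β => (g.support : Set β)) '' ↑σ.cycleFactorsFinset
    with hB
  have hset : {C : Set β | IsCycleOf σ C} = A ∪ B := by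
    ext C
    rw [Set.mem_setOf_eq, isCycleOf_iff_orbit]
    constructor
    · rintro ⟨x, rfl⟩
      by_cases hx : σ x = x
      · exact Or.inl ⟨x, hx, (orbit_of_fixed hx).symm⟩
      · refine Or.inr ⟨σ.cycleOf x, ?_, (orbit_of_mem_support (Equiv.Perm.mem_support.2 hx)).symm⟩
        exact Finset.mem_coe.2 (Equiv.Perm.cycleOf_mem_cycleFactorsFinset_iff.mpr
          (Equiv.Perm.mem_support.2 hx))
    · rintro (⟨x, hx, rfl⟩ | ⟨g, hg, rfl⟩)
      · exact ⟨x, (orbit_of_fixed hx).symm⟩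
      · have hg' := (Equiv.Perm.mem_cycleFactorsFinset_iff.1 (Finset.mem_coe.1 hg))
        obtain ⟨x, hgx, -⟩ := hg'.1
        have hxg : x ∈ g.support := Equiv.Perm.mem_support.2 hgx
        have hxs : x ∈ σ.support := by
          rw [Equiv.Perm.mem_support, ← hg'.2 x hxg]; exact hgx
        have : g = σ.cycleOf x := Equiv.Perm.cycle_is_cycleOf hxg (Finset.mem_coe.1 hg)
        refine ⟨x, ?_⟩
        rw [orbit_of_mem_support hxs, this]
  have hdisj : Disjoint A B := by
    rw [Set.disjoint_left]
    rintro C ⟨x, -, rfl⟩ ⟨g, hg, hEq⟩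
    have hgc := (Equiv.Perm.mem_cycleFactorsFinset_iff.1 (Finset.mem_coe.1 hg)).1
    have h2 : 2 ≤ g.support.card := hgc.two_le_card_support
    have : g.support = {x} := by
      apply Finset.coe_injective
      rw [Finset.coe_singleton]
      exact hEq
    rw [this] at h2
    simp at h2
  have hAcard : A.ncard = Fintype.card β - σ.support.card := by
    rw [hA, Set.ncard_image_of_injective _ Set.singleton_injective]
    have : {x : β | σ x = x} = ((σ.supportᶜ : Finset β) : Set β) := by
      ext x; simp [Equiv.Perm.mem_support]
    rw [this, Set.ncard_coe_finset, Finset.card_compl, Fintype.card]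
  have hBcard : B.ncard = σ.cycleFactorsFinset.card := by
    rw [hB, Set.ncard_image_of_injOn, Set.ncard_coe_finset]
    rintro g hg g' hg' hEq
    have hgc := (Equiv.Perm.mem_cycleFactorsFinset_iff.1 (Finset.mem_coe.1 hg)).1
    obtain ⟨x, hgx, -⟩ := hgc
    have hxg : x ∈ g.support := Equiv.Perm.mem_support.2 hgx
    have hsupp : g.support = g'.support := Finset.coe_injective hEq
    have hxg' : x ∈ g'.support := hsupp ▸ hxg
    rw [Equiv.Perm.cycle_is_cycleOf hxg (Finset.mem_coe.1 hg),
      Equiv.Perm.cycle_is_cycleOf hxg' (Finset.mem_coe.1 hg')]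
  rw [numCycles, hset, Set.ncard_union_eq hdisj (Set.toFinite A) (Set.toFinite B),
    hAcard, hBcard]

lemma sign_eq_numCycles {n : ℕ} (σ : Equiv.Perm (Fin n)) :
    (Equiv.Perm.sign σ : ℤ) = (-1) ^ (n - numCycles σ) := by
  classical
  have hnum := numCycles_eq σ
  rw [Fintype.card_fin] at hnum
  have hcards : Multiset.card σ.cycleType = σ.cycleFactorsFinset.card := by
    rw [Equiv.Perm.cycleType_def, Multiset.card_map]; rfl
  have hsum : σ.cycleType.sum = σ.support.card := Equiv.Perm.sum_cycleType σ
  have hf_le : Multiset.card σ.cycleType ≤ σ.cycleType.sum := by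
    have := Multiset.card_nsmul_le_sum (s := σ.cycleType) (a := 1)
      (fun x hx => le_trans (by norm_num) (Equiv.Perm.two_le_of_mem_cycleType hx))
    simpa using this
  have hs_le : σ.support.card ≤ n := by
    simpa using Finset.card_le_card (Finset.subset_univ σ.support)
  have hsign := Equiv.Perm.sign_of_cycleType σ
  have hsign' : (Equiv.Perm.sign σ : ℤ) =
      (-1) ^ (σ.cycleType.sum + Multiset.card σ.cycleType) := by
    rw [hsign]; push_cast; ring
  rw [hsign', hsum, hcards]
  set s := σ.support.card with hs
  set c := σ.cycleFactorsFinset.card with hc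
  rw [hsum, hcards] at hf_le
  have hexp : s + c = (n - numCycles σ) + 2 * c := by omega
  rw [hexp, pow_add, pow_mul]
  norm_num

end SignCycles

section StdPerm

lemma strictMono_equiv_eq_refl {n : ℕ} (e : Equiv.Perm (Fin n))
    (he : StrictMono e) : ∀ x, e x = x := by
  have key : ∀ m : ℕ, ∀ i : Fin n, (i : ℕ) = m → m ≤ (e i : ℕ) := by
    intro m
    induction m with
    | zero => intro i _; exact Nat.zero_le _
    | succ k ih =>
      intro i hi
      have hk : k < n := by omega
      have h1 := ih ⟨k, hk⟩ rfl
      have h2 : e ⟨k, hk⟩ < e i := he (by simp only [Fin.lt_def, Fin.val_mk]; omega)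
      rw [Fin.lt_def] at h2
      omega
  have hle : ∀ i : Fin n, (i : ℕ) ≤ (e i : ℕ) := fun i => key i i rfl
  have hsymm : StrictMono e.symm := fun a b hab => by
    rcases lt_trichotomy (e.symm a) (e.symm b) with h | h | h
    · exact h
    · exfalso; rw [show a = b by rw [← e.apply_symm_apply a, ← e.apply_symm_apply b, h]] at hab
      exact lt_irrefl _ hab
    · exfalso
      have := he h
      rw [e.apply_symm_apply, e.apply_symm_apply] at this
      exact lt_asymm hab this
  have key2 : ∀ m : ℕ, ∀ i : Fin n, (i : ℕ) = m → m ≤ (e.symm i : ℕ) := by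
    intro m
    induction m with
    | zero => intro i _; exact Nat.zero_le _
    | succ k ih =>
      intro i hi
      have hk : k < n := by omega
      have h1 := ih ⟨k, hk⟩ rfl
      have h2 : e.symm ⟨k, hk⟩ < e.symm i := hsymm (by simp only [Fin.lt_def, Fin.val_mk]; omega)
      rw [Fin.lt_def] at h2
      omega
  intro x
  have h1 : (x : ℕ) ≤ (e x : ℕ) := hle x
  have h2 : ((e x : Fin n) : ℕ) ≤ (e.symm (e x) : ℕ) := key2 (e x) (e x) rfl
  rw [e.symm_apply_apply] at h2
  exact Fin.ext (le_antisymm h2 h1).symm.symm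

lemma stdPerm_unique {α : Type*} [LinearOrder α] {n : ℕ} {w : List α}
    {σ τ : Equiv.Perm (Fin n)} (hσ : IsStdPerm w σ) (hτ : IsStdPerm w τ) : σ = τ := by
  obtain ⟨h, hs⟩ := hσ
  obtain ⟨h', ht⟩ := hτ
  have key : ∀ i j : Fin n, σ i < σ j ↔ τ i < τ j := by
    intro i j
    rw [hs i j, ht i j]
  have hmono : StrictMono (σ.symm.trans τ) := by
    intro a b hab
    have := (key (σ.symm a) (σ.symm b)).mp (by simpa using hab)
    simpa using this
  have := strictMono_equiv_eq_refl _ hmono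
  ext j
  have := this (σ j)
  simp only [Equiv.trans_apply, Equiv.symm_apply_apply] at this
  exact congrArg Fin.val this.symm

end StdPerm

section Dol

variable {α : Type*} [LinearOrder α]

lemma dol_eq (w : List α) (i : ℕ) :
    dol w i = List.insertIdx (w.map (fun a => WithBot.some a)) (i-1) (⊥ : WithBot α) := by
  unfold dol
  congr 1
  simp [List.map_eq_flatMap]

lemma dol_length (w : List α) (i : ℕ) (h2 : i ≤ w.length + 1) :
    (dol w i).length = w.length + 1 := by
  rw [dol_eq, List.length_insertIdx_of_le_length (by rw [List.length_map]; omega)]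
  simp

lemma dol_getElem_lt (w : List α) {i j : ℕ} (hj : j < i - 1) (hjw : j < w.length)
    (h2 : i ≤ w.length + 1) :
    (dol w i)[j]'(by rw [dol_length w i h2]; omega) = WithBot.some w[j] := by
  rw [getElem_congr_coll (dol_eq w i)]
  rw [List.getElem_insertIdx_of_lt hj]
  simp

lemma dol_getElem_self (w : List α) {i : ℕ} (h1 : 1 ≤ i) (h2 : i ≤ w.length + 1) :
    (dol w i)[i-1]'(by rw [dol_length w i h2]; omega) = (⊥ : WithBot α) := by
  rw [getElem_congr_coll (dol_eq w i)]
  rw [List.getElem_insertIdx_self]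

lemma dol_getElem_gt (w : List α) {i j : ℕ} (h1 : 1 ≤ i) (hij : i - 1 < j)
    (hj : j < w.length + 1) :
    (dol w i)[j]'(by rw [dol_length w i (by omega)]; omega) =
      WithBot.some (w[j-1]'(by omega)) := by
  obtain ⟨k, rfl⟩ : ∃ k, j = (i - 1) + k + 1 := ⟨j - i, by omega⟩
  rw [getElem_congr_coll (dol_eq w i)]
  rw [List.getElem_insertIdx_add_succ _ _ _ _ (by rw [List.length_map]; omega)]
  simp

end Dol

section Steps

lemma stdPerm_swap {β : Type*} [LinearOrder β] {n : ℕ} {u u' : List β}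
    (hu : u.length = n) (hu' : u'.length = n) {k : ℕ} (hk : k + 1 < n)
    (h01 : u'[k]'(by omega) = u[k+1]'(by omega))
    (h10 : u'[k+1]'(by omega) = u[k]'(by omega))
    (hne : u[k]'(by omega) ≠ u[k+1]'(by omega))
    (hoth : ∀ j (hj : j < n), j ≠ k → j ≠ k+1 → u'[j]'(by omega) = u[j]'(by omega))
    {τ : Equiv.Perm (Fin n)} (hτ : IsStdPerm u' τ) :
    IsStdPerm u (τ * Equiv.swap (⟨k, by omega⟩ : Fin n) ⟨k+1, hk⟩) := by
  obtain ⟨h', ht⟩ := hτ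
  set a : Fin n := ⟨k, by omega⟩ with ha
  set b : Fin n := ⟨k+1, hk⟩ with hb
  set s := Equiv.swap a b with hsdef
  have hsval : ∀ x : Fin n, ((s x : Fin n) : ℕ) =
      if (x:ℕ) = k then k+1 else if (x:ℕ) = k+1 then k else (x:ℕ) := by
    intro x
    rcases eq_or_ne x a with rfl | hxa
    · simp [hsdef, Equiv.swap_apply_left, ha, hb]
    · rcases eq_or_ne x b with rfl | hxb
      · simp [hsdef, Equiv.swap_apply_right, ha, hb]
      · rw [hsdef, Equiv.swap_apply_of_ne_of_ne hxa hxb]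
        have h1 : (x:ℕ) ≠ k := fun h => hxa (Fin.ext h)
        have h2 : (x:ℕ) ≠ k+1 := fun h => hxb (Fin.ext h)
        simp [h1, h2]
  have hget : ∀ x : Fin n, u'[((s x : Fin n) : ℕ)]'(by rw [hu']; exact (s x).isLt) =
      u[(x : ℕ)]'(by rw [hu]; exact x.isLt) := by
    intro x
    have hv := hsval x
    by_cases h1 : (x:ℕ) = k
    · have hv' : ((s x : Fin n) : ℕ) = k + 1 := by rw [hv]; simp [h1]
      simp only [hv', h1]
      exact h10
    · by_cases h2 : (x:ℕ) = k+1
      · have hv' : ((s x : Fin n) : ℕ) = k := by rw [hv]; simp [h1, h2]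
        simp only [hv', h2]
        exact h01
      · have hv' : ((s x : Fin n) : ℕ) = (x:ℕ) := by rw [hv]; simp [h1, h2]
        simp only [hv']
        exact hoth _ x.isLt h1 h2
  refine ⟨hu, ?_⟩
  intro i j
  have horder : u[(i : ℕ)]'(by rw [hu]; exact i.isLt) = u[(j : ℕ)]'(by rw [hu]; exact j.isLt) →
      (s i < s j ↔ i < j) := by
    intro he
    rcases eq_or_ne i j with rfl | hij
    · simp
    have hij' : (i:ℕ) ≠ (j:ℕ) := fun h => hij (Fin.ext h)
    have hA : ¬((i:ℕ) = k ∧ (j:ℕ) = k+1) := by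
      rintro ⟨hh1, hh2⟩
      apply hne
      simpa only [hh1, hh2] using he
    have hB : ¬((j:ℕ) = k ∧ (i:ℕ) = k+1) := by
      rintro ⟨hh1, hh2⟩
      apply hne
      simpa only [hh1, hh2] using he.symm
    rw [Fin.lt_def, Fin.lt_def, hsval i, hsval j]
    split_ifs <;> omega
  have hmul : ∀ x : Fin n, (τ * s) x = τ (s x) := fun x => rfl
  rw [hmul i, hmul j, ht (s i) (s j)]
  simp only [List.get_eq_getElem, Fin.coe_cast]
  rw [hget i, hget j]
  constructor
  · rintro (h | ⟨he, hlt⟩)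
    · exact Or.inl h
    · exact Or.inr ⟨he, (horder he).1 hlt⟩
  · rintro (h | ⟨he, hlt⟩)
    · exact Or.inl h
    · exact Or.inr ⟨he, (horder he).2 hlt⟩

lemma stdPerm_base {α : Type*} [LinearOrder α] (w : List α) {σ : Equiv.Perm (Fin w.length)}
    (hσ : IsStdPerm w σ) :
    IsStdPerm (dol w 1) (Equiv.Perm.decomposeFin.symm (0, σ)) := by
  obtain ⟨hw, hs⟩ := hσ
  have hlen : (dol w 1).length = w.length + 1 := dol_length w 1 (by omega)
  refine ⟨hlen, ?_⟩
  have hval0 : (dol w 1)[0]'(by omega) = (⊥ : WithBot α) := dol_getElem_self w le_rfl (by omega)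
  have hvals : ∀ m : ℕ, (hm : m < w.length) →
      (dol w 1)[m+1]'(by omega) = WithBot.some (w[m]'hm) := by
    intro m hm
    have := dol_getElem_gt w (i := 1) (j := m+1) le_rfl (by omega) (by omega)
    simpa using this
  set τ := Equiv.Perm.decomposeFin.symm (0, σ) with hτ
  have hτ0 : τ 0 = 0 := by simp [hτ]
  have hτs : ∀ x : Fin w.length, τ x.succ = (σ x).succ := by
    intro x
    simp [hτ]
  intro i j
  rcases Fin.eq_zero_or_eq_succ i with rfl | ⟨i', rfl⟩
  · rcases Fin.eq_zero_or_eq_succ j with rfl | ⟨j', rfl⟩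
    · simp
    · rw [hτ0, hτs j']
      simp only [List.get_eq_getElem, Fin.coe_cast, Fin.val_zero, Fin.val_succ]
      rw [hval0, hvals j' j'.isLt]
      exact iff_of_true (Fin.succ_pos _) (Or.inl (WithBot.bot_lt_coe _))
  · rcases Fin.eq_zero_or_eq_succ j with rfl | ⟨j', rfl⟩
    · rw [hτ0, hτs i']
      simp only [List.get_eq_getElem, Fin.coe_cast, Fin.val_zero, Fin.val_succ]
      rw [hval0, hvals i' i'.isLt]
      refine iff_of_false (Fin.not_lt_zero _) ?_
      rintro (h | ⟨h, -⟩)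
      · exact absurd h (by simp)
      · exact absurd h (by simp)
    · rw [hτs i', hτs j']
      simp only [List.get_eq_getElem, Fin.coe_cast, Fin.val_succ]
      rw [hvals i' i'.isLt, hvals j' j'.isLt]
      have := hs i' j'
      simp only [List.get_eq_getElem, Fin.coe_cast] at this
      rw [Fin.succ_lt_succ_iff, this]
      simp only [WithBot.coe_lt_coe, WithBot.coe_inj, Fin.succ_lt_succ_iff]

end Steps

/-- For every `1 ≤ i ≤ n+1`, `sgn(σ_i) = (−1)^{n−c+i−1}`, where `c` is
the number of cycles of `σ_w`. -/
theorem statement_12 {α : Type*} [LinearOrder α] [Fintype α] (w : List α)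
    (σ : Equiv.Perm (Fin w.length)) (hσ : IsStdPerm w σ)
    (i : ℕ) (h1 : 1 ≤ i) (h2 : i ≤ w.length + 1)
    (σi : Equiv.Perm (Fin (w.length + 1))) (hσi : IsStdPerm (dol w i) σi) :
    (Equiv.Perm.sign σi : ℤ) = (-1) ^ (w.length - numCycles σ + i - 1) := by
  classical
  have main : ∀ m : ℕ, 1 ≤ m → m ≤ w.length + 1 → ∀ τ : Equiv.Perm (Fin (w.length+1)),
      IsStdPerm (dol w m) τ →
      (Equiv.Perm.sign τ : ℤ) = (-1)^(w.length - numCycles σ) * (-1)^(m-1) := by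
    intro m
    induction m with
    | zero => omega
    | succ k ih =>
      intro h1m h2m τ hτ
      rcases Nat.eq_zero_or_pos k with rfl | hkpos
      · have hbase := stdPerm_base w hσ
        have hτ1 : IsStdPerm (dol w 1) τ := by simpa using hτ
        have heq : τ = Equiv.Perm.decomposeFin.symm (0, σ) := stdPerm_unique hτ1 hbase
        rw [heq, Equiv.Perm.decomposeFin.symm_sign]
        simp [sign_eq_numCycles σ]
      · obtain ⟨p, rfl⟩ : ∃ p, k = p + 1 := ⟨k - 1, by omega⟩
        have hpn : p + 1 ≤ w.length := by omega
        have hu : (dol w (p+1)).length = w.length + 1 := dol_length w (p+1) (by omega)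
        have hu' : (dol w (p+2)).length = w.length + 1 := dol_length w (p+2) (by omega)
        have h01 : (dol w (p+2))[p]'(by omega) = (dol w (p+1))[p+1]'(by omega) := by
          have hL := dol_getElem_lt w (i := p+2) (j := p) (by omega) (by omega) (by omega)
          have hR := dol_getElem_gt w (i := p+1) (j := p+1) (by omega) (by omega) (by omega)
          exact hL.trans hR.symm
        have h10 : (dol w (p+2))[p+1]'(by omega) = (dol w (p+1))[p]'(by omega) := by
          have hL := dol_getElem_self w (i := p+2) (by omega) (by omega)
          have hR := dol_getElem_self w (i := p+1) (by omega) (by omega)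
          exact hL.trans hR.symm
        have hne : (dol w (p+1))[p]'(by omega) ≠ (dol w (p+1))[p+1]'(by omega) := by
          have hL : (dol w (p+1))[p]'(by omega) = (⊥ : WithBot α) :=
            dol_getElem_self w (i := p+1) (by omega) (by omega)
          have hR := dol_getElem_gt w (i := p+1) (j := p+1) (by omega) (by omega) (by omega)
          rw [hL, hR]
          exact WithBot.bot_ne_coe
        have hoth : ∀ j (hj : j < w.length + 1), j ≠ p → j ≠ p+1 →
            (dol w (p+2))[j]'(by omega) = (dol w (p+1))[j]'(by omega) := by
          intro j hj hj1 hj2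
          rcases lt_or_gt_of_ne hj1 with h | h
          · have hL := dol_getElem_lt w (i := p+2) (j := j) (by omega) (by omega) (by omega)
            have hR := dol_getElem_lt w (i := p+1) (j := j) (by omega) (by omega) (by omega)
            exact hL.trans hR.symm
          · have hgt : p + 1 < j := by omega
            have hL := dol_getElem_gt w (i := p+2) (j := j) (by omega) (by omega) (by omega)
            have hR := dol_getElem_gt w (i := p+1) (j := j) (by omega) (by omega) (by omega)
            exact hL.trans hR.symm
        have hstd := stdPerm_swap (hu := hu) (hu' := hu') (hk := by omega)
          (h01 := h01) (h10 := h10) (hne := hne) (hoth := hoth) hτ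
        have hih := ih (by omega) (by omega) _ hstd
        have hss : (Equiv.Perm.sign (τ * Equiv.swap (⟨p, by omega⟩ : Fin (w.length+1)) ⟨p+1, by omega⟩) : ℤ)
            = (Equiv.Perm.sign τ : ℤ) *
              (Equiv.Perm.sign (Equiv.swap (⟨p, by omega⟩ : Fin (w.length+1)) ⟨p+1, by omega⟩) : ℤ) := by
          rw [map_mul]; push_cast; ring
        have hsw : (Equiv.Perm.sign (Equiv.swap (⟨p, by omega⟩ : Fin (w.length+1)) ⟨p+1, by omega⟩) : ℤ) = -1 := by
          rw [Equiv.Perm.sign_swap (by simp [Fin.ext_iff])]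
          simp
        rw [hss, hsw] at hih
        simp only [Nat.add_sub_cancel] at hih ⊢
        have hfin : (Equiv.Perm.sign τ : ℤ) = -((-1:ℤ)^(w.length - numCycles σ) * (-1)^p) := by
          linarith
        rw [hfin, pow_succ]
        ring
  have := main i h1 h2 σi hσi
  rw [this]
  have hexp : w.length - numCycles σ + i - 1 = (w.length - numCycles σ) + (i - 1) := by omega
  rw [hexp, pow_add]

end DollarBWT
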